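/- Let R be a commutative ring, equip the free algebra R⟨X₁,…,Xₙ⟩ with a weight ℕ-gradation determined by positive integer degrees deg Xᵢ = nᵢ, let ≺ be an ℕ-graded monomial ordering on the standard monomial basis B, and let G be a monic Gröbner basis of the ideal I = ⟨G⟩. If the monomial algebra R⟨X₁,…,Xₙ⟩/⟨LM(G)⟩ is a prime ring (i.e., whenever a, b satisfy a·r·b = 0 for all r, then a = 0 or b = 0), then both R⟨X₁,…,Xₙ⟩/⟨LH(G)⟩ and A = R⟨X₁,…,Xₙ⟩/I are prime rings. -/

import Mathlib

noncomputable section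
open MonoidAlgebra
open scoped Classical

/-- Words in the alphabet `X_1, ..., X_n`: the standard monomial basis `B`. -/
abbrev Word (n : ℕ) : Type := FreeMonoid (Fin n)

/-- The free `R`-algebra `R⟨X_1, ..., X_n⟩`, realized as the monoid algebra of the
free monoid on `n` letters over `R`. -/
abbrev FreeAlg (R : Type) [CommRing R] (n : ℕ) : Type := MonoidAlgebra R (Word n)

variable {R : Type} [CommRing R] {n : ℕ}

/-- The monomial (word) `w` viewed as an element of the free algebra. -/
def mono (R : Type) [CommRing R] {n : ℕ} (w : Word n) : FreeAlg R n :=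
  MonoidAlgebra.of R (Word n) w

/-- A monomial ordering: a well-ordering on words compatible with two-sided multiplication. -/
def IsMonomialOrder (n : ℕ) [LinearOrder (Word n)] : Prop :=
  WellFoundedLT (Word n) ∧ ∀ w u v s : Word n, u < v → w * u * s < w * v * s

/-- The leading monomial of `f` (with junk value `1` for `f = 0`). -/
def LMon [LinearOrder (Word n)] (f : FreeAlg R n) : Word n :=
  if h : f = 0 then 1 else f.coeff.support.max' (Finsupp.support_nonempty_iff.mpr (mt MonoidAlgebra.coeff_eq_zero.mp h))

/-- The leading coefficient of `f`. -/
def LCoef [LinearOrder (Word n)] (f : FreeAlg R n) : R := f.coeff (LMon f)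

/-- `f` is monic: it is nonzero and its leading coefficient is `1`. -/
def IsMonic [LinearOrder (Word n)] (f : FreeAlg R n) : Prop := f ≠ 0 ∧ LCoef f = 1

/-- `v` divides `u` as words: `u = w * v * s` for some words `w, s`. -/
def MDvd {n : ℕ} (v u : Word n) : Prop := ∃ w s : Word n, u = w * v * s

/-- `G` is a monic Gröbner basis of the two-sided ideal `I`: every element of `G` is monic,
and the leading monomial of every nonzero element of `I` is divisible by the leading
monomial of some element of `G`. -/
def IsMonicGB [LinearOrder (Word n)] (G : Set (FreeAlg R n))
    (I : TwoSidedIdeal (FreeAlg R n)) : Prop :=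
  (∀ g ∈ G, IsMonic g) ∧ ∀ f ∈ I, f ≠ 0 → ∃ g ∈ G, MDvd (LMon g) (LMon f)

/-- The set `LM(S)` of leading monomials of the nonzero elements of `S`. -/
def LMset [LinearOrder (Word n)] (S : Set (FreeAlg R n)) : Set (Word n) :=
  {w | ∃ f ∈ S, f ≠ 0 ∧ LMon f = w}

/-- The weight degree of a word, for the weights `deg Xᵢ = d i`. -/
def wdeg {n : ℕ} (d : Fin n → ℕ) (w : Word n) : ℕ := ((FreeMonoid.toList w).map d).sum

/-- The maximal weight degree occurring in `f`. -/
def maxdeg (d : Fin n → ℕ) (f : FreeAlg R n) : ℕ := f.coeff.support.sup (wdeg d)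

/-- The ℕ-leading homogeneous element `LH(f)` of `f`: the sum of the terms of `f` of
maximal weight degree. -/
def LH (d : Fin n → ℕ) (f : FreeAlg R n) : FreeAlg R n :=
  ∑ w ∈ f.coeff.support.filter (fun w => wdeg d w = maxdeg d f), MonoidAlgebra.single w (f.coeff w)

/-- The set `LH(S)` of leading homogeneous elements of the nonzero elements of `S`. -/
def LHset (d : Fin n → ℕ) (S : Set (FreeAlg R n)) : Set (FreeAlg R n) :=
  {x | ∃ f ∈ S, f ≠ 0 ∧ x = LH d f}

/-- An ℕ-graded monomial ordering with respect to the weights `d`: a monomial ordering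
such that words of smaller degree are smaller. -/
def IsGradedMonomialOrder {n : ℕ} (d : Fin n → ℕ) [LinearOrder (Word n)] : Prop :=
  IsMonomialOrder n ∧ ∀ u v : Word n, wdeg d u < wdeg d v → u < v

/-- The quotient ring of the free algebra by a two-sided ideal. -/
abbrev QuotRing (I : TwoSidedIdeal (FreeAlg R n)) : Type := I.ringCon.Quotient

open scoped Pointwise

/-! ### Basic lemmas -/

lemma word_inj (w s : Word n) : Function.Injective (fun u : Word n => w * u * s) := by
  intro a b hab
  simpa using hab

lemma mono_mul_eq (w : Word n) (f : FreeAlg R n) :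
    mono R w * f = MonoidAlgebra.mapDomain (fun u => w * u) f := by
  induction f using MonoidAlgebra.induction with
  | zero => simp
  | single_add a b f _ _ ih =>
    rw [mul_add, ih, MonoidAlgebra.mapDomain_add, MonoidAlgebra.mapDomain_single]
    congr 1
    show mono R w * MonoidAlgebra.single a b = _
    rw [mono, MonoidAlgebra.of_apply, MonoidAlgebra.single_mul_single, one_mul]

lemma mul_mono_eq (s : Word n) (f : FreeAlg R n) :
    f * mono R s = MonoidAlgebra.mapDomain (fun u => u * s) f := by
  induction f using MonoidAlgebra.induction with
  | zero => simp
  | single_add a b f _ _ ih =>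
    rw [add_mul, ih, MonoidAlgebra.mapDomain_add, MonoidAlgebra.mapDomain_single]
    congr 1
    show MonoidAlgebra.single a b * mono R s = _
    rw [mono, MonoidAlgebra.of_apply, MonoidAlgebra.single_mul_single, mul_one]

lemma sandwich_eq (w s : Word n) (f : FreeAlg R n) :
    mono R w * f * mono R s = MonoidAlgebra.mapDomain (fun u => w * u * s) f := by
  rw [mono_mul_eq, mul_mono_eq]
  show MonoidAlgebra.ofCoeff (Finsupp.mapDomain _ (Finsupp.mapDomain _ f.coeff)) = _
  rw [← Finsupp.mapDomain_comp]
  rfl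

lemma smul_eq_single_one_mul (c : R) (f : FreeAlg R n) :
    c • f = MonoidAlgebra.single (1 : Word n) c * f := by
  have : MonoidAlgebra.single (1 : Word n) c = c • (1 : FreeAlg R n) := by
    rw [MonoidAlgebra.one_def, MonoidAlgebra.smul_single', mul_one]
  rw [this, smul_mul_assoc, one_mul]

lemma smul_mem_ideal {J : TwoSidedIdeal (FreeAlg R n)} (c : R) {f : FreeAlg R n}
    (hf : f ∈ J) : c • f ∈ J := by
  rw [smul_eq_single_one_mul]; exact J.mul_mem_left _ _ hf

section Order
variable [LinearOrder (Word n)]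

lemma sandwich_le (hmo : IsMonomialOrder n) (w s : Word n) {u v : Word n} (huv : u ≤ v) :
    w * u * s ≤ w * v * s := by
  rcases eq_or_lt_of_le huv with rfl | h
  · exact le_refl _
  · exact le_of_lt (hmo.2 w u v s h)

lemma LMon_mem_support {f : FreeAlg R n} (hf : f ≠ 0) : LMon f ∈ f.coeff.support := by
  rw [LMon, dif_neg hf]; exact f.coeff.support.max'_mem _

lemma le_LMon {f : FreeAlg R n} {w : Word n} (hw : w ∈ f.coeff.support) : w ≤ LMon f := by
  have hf : f ≠ 0 := by rintro rfl; simp at hw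
  rw [LMon, dif_neg hf]; exact f.coeff.support.le_max' w hw

lemma LCoef_ne_zero {f : FreeAlg R n} (hf : f ≠ 0) : LCoef f ≠ 0 := by
  have := LMon_mem_support hf
  rwa [Finsupp.mem_support_iff] at this

lemma LMon_eq_of {f : FreeAlg R n} {z : Word n} (hmem : z ∈ f.coeff.support)
    (hmax : ∀ w ∈ f.coeff.support, w ≤ z) : LMon f = z := by
  have hf : f ≠ 0 := by rintro rfl; simp at hmem
  exact le_antisymm (hmax _ (LMon_mem_support hf)) (le_LMon hmem)

lemma sandwich_ne_zero_etc (hmo : IsMonomialOrder n) (w s : Word n) {h : FreeAlg R n}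
    (hh : h ≠ 0) :
    (mono R w * h * mono R s).coeff (w * LMon h * s) = LCoef h ∧
    mono R w * h * mono R s ≠ 0 ∧
    LMon (mono R w * h * mono R s) = w * LMon h * s := by
  rw [sandwich_eq]
  have h1 : (MonoidAlgebra.mapDomain (fun u => w * u * s) h).coeff (w * LMon h * s) = LCoef h :=
    Finsupp.mapDomain_apply (word_inj w s) h.coeff (LMon h)
  have hne : MonoidAlgebra.mapDomain (fun u => w * u * s) h ≠ 0 := by
    intro h0
    rw [h0] at h1
    exact LCoef_ne_zero hh h1.symm
  refine ⟨h1, hne, LMon_eq_of ?_ ?_⟩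
  · rw [Finsupp.mem_support_iff, h1]; exact LCoef_ne_zero hh
  · intro z hz
    have := Finsupp.mapDomain_support hz
    rw [Finset.mem_image] at this
    obtain ⟨u, hu, rfl⟩ := this
    exact sandwich_le hmo w s (le_LMon hu)

end Order

/-! ### Degrees and leading homogeneous parts -/

lemma wdeg_mul (d : Fin n → ℕ) (u v : Word n) : wdeg d (u * v) = wdeg d u + wdeg d v := by
  simp [wdeg, FreeMonoid.toList_mul]

/-- The degree-`m` homogeneous component. -/
def comp (d : Fin n → ℕ) (m : ℕ) (f : FreeAlg R n) : FreeAlg R n :=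
  MonoidAlgebra.ofCoeff (f.coeff.filter (fun w => wdeg d w = m))

lemma comp_apply (d : Fin n → ℕ) (m : ℕ) (f : FreeAlg R n) (z : Word n) :
    (comp d m f).coeff z = if wdeg d z = m then f.coeff z else 0 := by
  simp [comp, Finsupp.filter_apply, MonoidAlgebra.coeff_ofCoeff]

lemma comp_add (d : Fin n → ℕ) (m : ℕ) (f g : FreeAlg R n) :
    comp d m (f + g) = comp d m f + comp d m g := by
  ext z
  by_cases h : wdeg d z = m <;> simp [h, comp_apply]

lemma comp_neg (d : Fin n → ℕ) (m : ℕ) (f : FreeAlg R n) :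
    comp d m (-f) = -(comp d m f) := by
  ext z
  by_cases h : wdeg d z = m <;> simp [h, comp_apply]

lemma comp_smul (d : Fin n → ℕ) (m : ℕ) (c : R) (f : FreeAlg R n) :
    comp d m (c • f) = c • comp d m f := by
  ext z
  by_cases h : wdeg d z = m <;> simp [h, comp_apply]

lemma comp_zero (d : Fin n → ℕ) (m : ℕ) : comp d m (0 : FreeAlg R n) = 0 := by
  ext z; simp [comp_apply]

lemma comp_eq_self (d : Fin n → ℕ) (m : ℕ) {f : FreeAlg R n}
    (h : ∀ w ∈ f.coeff.support, wdeg d w = m) : comp d m f = f := by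
  ext z
  rw [comp_apply]
  by_cases hz : wdeg d z = m
  · rw [if_pos hz]
  · rw [if_neg hz]
    by_contra h0
    exact hz (h z (Finsupp.mem_support_iff.mpr fun hh => h0 hh.symm))

lemma comp_eq_zero (d : Fin n → ℕ) (m : ℕ) {f : FreeAlg R n}
    (h : ∀ w ∈ f.coeff.support, wdeg d w ≠ m) : comp d m f = 0 := by
  ext z
  rw [comp_apply]
  by_cases hz : wdeg d z = m
  · rw [if_pos hz]
    by_contra h0
    exact h z (Finsupp.mem_support_iff.mpr (by simpa using h0)) hz
  · rw [if_neg hz]; rfl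

lemma LH_eq_comp (d : Fin n → ℕ) (f : FreeAlg R n) : LH d f = comp d (maxdeg d f) f := by
  ext z
  have key : (∑ w ∈ f.coeff.support.filter (fun w => wdeg d w = maxdeg d f),
      MonoidAlgebra.single w (f.coeff w)).coeff z
      = if z ∈ f.coeff.support.filter (fun w => wdeg d w = maxdeg d f) then f.coeff z else 0 := by
    rw [MonoidAlgebra.coeff_sum, Finsupp.finset_sum_apply]
    rw [show (∑ w ∈ f.coeff.support.filter (fun w => wdeg d w = maxdeg d f),
        (MonoidAlgebra.single w (f.coeff w)).coeff z)
        = ∑ w ∈ f.coeff.support.filter (fun w => wdeg d w = maxdeg d f),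
          if w = z then f.coeff w else 0 from
      Finset.sum_congr rfl (fun w _ => Finsupp.single_apply)]
    exact Finset.sum_ite_eq' _ _ _
  rw [LH, key, comp_apply]
  by_cases hmem : z ∈ f.coeff.support
  · by_cases h : wdeg d z = maxdeg d f <;> simp [Finset.mem_filter, hmem, h]
  · by_cases h : wdeg d z = maxdeg d f <;>
      simp [Finset.mem_filter, hmem, h, Finsupp.notMem_support_iff.mp hmem]

section Graded
variable [LinearOrder (Word n)]

lemma le_maxdeg {d : Fin n → ℕ} {f : FreeAlg R n} {w : Word n} (hw : w ∈ f.coeff.support) :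
    wdeg d w ≤ maxdeg d f := Finset.le_sup hw

lemma wdeg_LMon (d : Fin n → ℕ) (hord : IsGradedMonomialOrder d) {f : FreeAlg R n}
    (hf : f ≠ 0) : wdeg d (LMon f) = maxdeg d f := by
  refine le_antisymm (le_maxdeg (LMon_mem_support hf)) (Finset.sup_le fun w hw => ?_)
  by_contra h
  push_neg at h
  exact absurd (le_LMon hw) (not_le.mpr (hord.2 _ _ h))

lemma LH_apply_LMon (d : Fin n → ℕ) (hord : IsGradedMonomialOrder d) {f : FreeAlg R n}
    (hf : f ≠ 0) : (LH d f).coeff (LMon f) = f.coeff (LMon f) := by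
  rw [LH_eq_comp, comp_apply, if_pos (wdeg_LMon d hord hf)]

lemma LH_support_subset (d : Fin n → ℕ) (f : FreeAlg R n) :
    (LH d f).coeff.support ⊆ f.coeff.support := by
  intro z hz
  rw [Finsupp.mem_support_iff] at hz ⊢
  rw [LH_eq_comp, comp_apply] at hz
  by_cases h : wdeg d z = maxdeg d f
  · rwa [if_pos h] at hz
  · rw [if_neg h] at hz; exact absurd rfl hz

lemma LH_ne_zero (d : Fin n → ℕ) (hord : IsGradedMonomialOrder d) {f : FreeAlg R n}
    (hf : f ≠ 0) : LH d f ≠ 0 := by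
  intro h0
  have := LH_apply_LMon d hord hf
  rw [h0] at this
  exact LCoef_ne_zero hf this.symm

lemma LMon_LH (d : Fin n → ℕ) (hord : IsGradedMonomialOrder d) {f : FreeAlg R n}
    (hf : f ≠ 0) : LMon (LH d f) = LMon f := by
  refine LMon_eq_of ?_ ?_
  · rw [Finsupp.mem_support_iff, LH_apply_LMon d hord hf]
    exact LCoef_ne_zero hf
  · exact fun w hw => le_LMon (LH_support_subset d f hw)

lemma LCoef_LH (d : Fin n → ℕ) (hord : IsGradedMonomialOrder d) {f : FreeAlg R n}
    (hf : f ≠ 0) : LCoef (LH d f) = LCoef f := by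
  rw [LCoef, LMon_LH d hord hf, LH_apply_LMon d hord hf, LCoef]

lemma LH_support_wdeg (d : Fin n → ℕ) (f : FreeAlg R n) {w : Word n}
    (hw : w ∈ (LH d f).coeff.support) : wdeg d w = maxdeg d f := by
  rw [Finsupp.mem_support_iff, LH_eq_comp, comp_apply] at hw
  by_cases h : wdeg d w = maxdeg d f
  · exact h
  · rw [if_neg h] at hw; exact absurd rfl hw

end Graded

section Ideals
variable [LinearOrder (Word n)]

/-- A word is "non-normal" if it is divisible by some leading monomial of `G`. -/
def NonNormal (G : Set (FreeAlg R n)) (w : Word n) : Prop :=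
  ∃ v ∈ LMset G, MDvd v w

lemma nonNormal_sandwich {G : Set (FreeAlg R n)} {w : Word n} (h : NonNormal G w)
    (u s : Word n) : NonNormal G (u * w * s) := by
  obtain ⟨v, hv, a, b, rfl⟩ := h
  exact ⟨v, hv, u * a, b * s, by simp [mul_assoc]⟩

/-- Every element of the monomial ideal is supported on non-normal words. -/
lemma mem_monomialIdeal_support {G : Set (FreeAlg R n)} {x : FreeAlg R n}
    (hx : x ∈ TwoSidedIdeal.span (mono R '' LMset G)) :
    ∀ w ∈ x.coeff.support, NonNormal G w := by
  rw [TwoSidedIdeal.mem_span_iff_mem_addSubgroup_closure] at hx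
  induction hx using AddSubgroup.closure_induction with
  | mem y hy =>
    rw [Set.mem_mul] at hy
    obtain ⟨p, hp, q, hq, rfl⟩ := hy
    rw [Set.mem_mul] at hp
    obtain ⟨a, -, m, hm, rfl⟩ := hp
    obtain ⟨v, hv, rfl⟩ := hm
    intro w hw
    have h1 := MonoidAlgebra.support_coeff_mul_subset (a * mono R v) q
    have h2 := MonoidAlgebra.support_coeff_mul_subset a (mono R v)
    have hw1 := h1 hw
    rw [Finset.mem_mul] at hw1
    obtain ⟨y, hy, z, hz, rfl⟩ := hw1
    have := h2 hy
    rw [Finset.mem_mul] at this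
    obtain ⟨y1, hy1, y2, hy2, rfl⟩ := this
    have : y2 = v := by
      have := Finsupp.support_single_subset (show y2 ∈ (Finsupp.single v (1 : R)).support from hy2)
      simpa using this
    exact ⟨v, hv, y1, z, by rw [this]⟩
  | zero => intro w hw; simp at hw
  | add x y _ _ ihx ihy =>
    intro w hw
    rw [MonoidAlgebra.coeff_add] at hw
    have := Finsupp.support_add hw
    rw [Finset.mem_union] at this
    rcases this with h | h
    · exact ihx w h
    · exact ihy w h
  | neg x _ ihx =>
    intro w hw
    rw [MonoidAlgebra.coeff_neg, Finsupp.support_neg] at hw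
    exact ihx w hw

lemma nonNormal_single_mem {G : Set (FreeAlg R n)} {w : Word n} (h : NonNormal G w) (c : R) :
    MonoidAlgebra.single w c ∈ TwoSidedIdeal.span (mono R '' LMset G) := by
  obtain ⟨v, hv, a, b, rfl⟩ := h
  have hv' : mono R v ∈ TwoSidedIdeal.span (mono R '' LMset G) :=
    TwoSidedIdeal.subset_span ⟨v, hv, rfl⟩
  have : mono R (a * v * b) = mono R a * mono R v * mono R b := by
    simp [mono, map_mul]
  have hmem : mono R (a * v * b) ∈ TwoSidedIdeal.span (mono R '' LMset G) := by
    rw [this]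
    exact TwoSidedIdeal.mul_mem_right _ _ _ (TwoSidedIdeal.mul_mem_left _ _ _ hv')
  have : MonoidAlgebra.single (a * v * b) c = c • mono R (a * v * b) := by
    rw [mono, MonoidAlgebra.of_apply, MonoidAlgebra.smul_single', mul_one]
  rw [this]
  exact smul_mem_ideal c hmem

end Ideals

section Reduce
variable [LinearOrder (Word n)]

/-- Division/reduction: modulo `J` any element has a representative that is `0` or has a
normal leading monomial. -/
lemma reduce (hmo : IsMonomialOrder n) {G : Set (FreeAlg R n)}
    {J : TwoSidedIdeal (FreeAlg R n)}
    (hg : ∀ v ∈ LMset G, ∃ h ∈ J, h ≠ 0 ∧ LCoef h = 1 ∧ LMon h = v) :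
    ∀ f : FreeAlg R n, ∃ f', f - f' ∈ J ∧
      (f' = 0 ∨ (f' ≠ 0 ∧ ¬ NonNormal G (LMon f'))) := by
  suffices H : ∀ v : Word n, ∀ f : FreeAlg R n, LMon f = v → ∃ f', f - f' ∈ J ∧
      (f' = 0 ∨ (f' ≠ 0 ∧ ¬ NonNormal G (LMon f'))) by
    intro f; exact H (LMon f) f rfl
  have wf : WellFounded ((· < ·) : Word n → Word n → Prop) := hmo.1.wf
  intro v
  induction v using WellFounded.induction wf with
  | _ v ih =>
  intro f hfv
  by_cases hf0 : f = 0
  · exact ⟨0, by simp [hf0], Or.inl rfl⟩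
  by_cases hnn : NonNormal G (LMon f)
  · obtain ⟨lv, hlv, u, s, hdvd⟩ := hnn
    obtain ⟨h, hhJ, hh0, hhC, hhM⟩ := hg lv hlv
    obtain ⟨htc, htne, htM⟩ := sandwich_ne_zero_etc hmo u s hh0
    rw [hhM, ← hdvd] at htM htc
    rw [hhC] at htc
    set t : FreeAlg R n := mono R u * h * mono R s with ht
    set q : FreeAlg R n := f - LCoef f • t with hq
    have hfq : f - q ∈ J := by
      rw [hq]
      simp only [sub_sub_cancel]
      exact smul_mem_ideal _ (J.mul_mem_right _ _ (J.mul_mem_left _ _ hhJ))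
    by_cases hq0 : q = 0
    · exact ⟨0, by simpa [hq0] using hfq, Or.inl rfl⟩
    · have hqco : q.coeff (LMon f) = 0 := by
        rw [hq]
        show f.coeff (LMon f) - (LCoef f • t).coeff (LMon f) = 0
        rw [MonoidAlgebra.coeff_smul_apply, htc, smul_eq_mul, mul_one, ← LCoef, sub_self]
      have hqlt : LMon q < LMon f := by
        have hle : LMon q ≤ LMon f := by
          have hmem := LMon_mem_support hq0
          rw [hq, MonoidAlgebra.coeff_sub] at hmem
          have := Finsupp.support_sub hmem
          rw [Finset.mem_union] at this
          rcases this with h' | h'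
          · exact le_LMon h'
          · rw [MonoidAlgebra.coeff_smul] at h'
            have h'' := Finsupp.support_smul h'
            calc LMon q ≤ LMon t := le_LMon h''
            _ = LMon f := htM
        have hne : LMon q ≠ LMon f := by
          intro he
          have := LCoef_ne_zero hq0
          rw [LCoef, he] at this
          exact this hqco
        exact lt_of_le_of_ne hle hne
      rw [hfv] at hqlt
      obtain ⟨f', hf'J, hf'⟩ := ih (LMon q) hqlt q rfl
      refine ⟨f', ?_, hf'⟩
      have : f - f' = (f - q) + (q - f') := (sub_add_sub_cancel f q f').symm
      rw [this]
      exact J.add_mem hfq hf'J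
  · exact ⟨f, by simp [J.zero_mem], Or.inr ⟨hf0, hnn⟩⟩

end Reduce

section SpanLH
variable [LinearOrder (Word n)]

lemma comp_single (d : Fin n → ℕ) (m : ℕ) (w : Word n) (b : R) :
    comp d m (MonoidAlgebra.single w b) = if wdeg d w = m then MonoidAlgebra.single w b else 0 := by
  ext z
  rw [comp_apply]
  by_cases hw : wdeg d w = m
  · rw [if_pos hw]
    by_cases hz : wdeg d z = m
    · rw [if_pos hz]
    · rw [if_neg hz]
      rw [MonoidAlgebra.coeff_single, Finsupp.single_apply]
      by_cases hzw : w = z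
      · subst hzw; exact absurd hw hz
      · rw [if_neg hzw]
  · rw [if_neg hw]
    by_cases hz : wdeg d z = m
    · rw [if_pos hz, MonoidAlgebra.coeff_single, Finsupp.single_apply]
      by_cases hzw : w = z
      · subst hzw; exact absurd hz hw
      · rw [if_neg hzw]; rfl
    · rw [if_neg hz]; rfl

lemma comp_mapDomain (d : Fin n → ℕ) (m : ℕ) (e : Word n → Word n) (f : FreeAlg R n) :
    comp d m (MonoidAlgebra.mapDomain e f)
      = MonoidAlgebra.mapDomain e
          (MonoidAlgebra.ofCoeff (Finsupp.filter (fun w => wdeg d (e w) = m) f.coeff)) := by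
  show MonoidAlgebra.ofCoeff (Finsupp.filter (fun w => wdeg d w = m) (Finsupp.mapDomain e f.coeff))
    = MonoidAlgebra.ofCoeff (Finsupp.mapDomain e (Finsupp.filter (fun w => wdeg d (e w) = m) f.coeff))
  congr 1
  induction f.coeff using Finsupp.induction with
  | zero => simp [Finsupp.filter_zero]
  | single_add a b f _ _ ih =>
    rw [Finsupp.mapDomain_add, Finsupp.filter_add, ih, Finsupp.filter_add, Finsupp.mapDomain_add]
    congr 1
    rw [Finsupp.mapDomain_single]
    by_cases h : wdeg d (e a) = m
    · rw [Finsupp.filter_single_of_pos (p := fun w => wdeg d w = m) h,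
        Finsupp.filter_single_of_pos (p := fun w => wdeg d (e w) = m) h,
        Finsupp.mapDomain_single]
    · rw [Finsupp.filter_single_of_neg (p := fun w => wdeg d w = m) h,
        Finsupp.filter_single_of_neg (p := fun w => wdeg d (e w) = m) h,
        Finsupp.mapDomain_zero]

/-- Key lemma: a nonzero element of `⟨LH(G)⟩` has leading monomial divisible by some `LM(g)`. -/
lemma span_LH_LMon (d : Fin n → ℕ) (hord : IsGradedMonomialOrder d) {G : Set (FreeAlg R n)}
    (hGB : IsMonicGB G (TwoSidedIdeal.span G))
    {x : FreeAlg R n} (hx : x ∈ TwoSidedIdeal.span (LHset d G)) (hx0 : x ≠ 0) :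
    ∃ g ∈ G, MDvd (LMon g) (LMon x) := by
  set P : FreeAlg R n → Prop := fun x => ∀ m : ℕ, ∃ F ∈ TwoSidedIdeal.span G,
    comp d m F = comp d m x ∧ ∀ w ∈ F.coeff.support, wdeg d w ≤ m with hP
  have Pzero : P 0 := fun m => ⟨0, TwoSidedIdeal.zero_mem _, by rw [comp_zero], by simp⟩
  have Padd : ∀ x y, P x → P y → P (x + y) := by
    intro x y hx hy m
    obtain ⟨F1, h1, e1, s1⟩ := hx m
    obtain ⟨F2, h2, e2, s2⟩ := hy m
    refine ⟨F1 + F2, TwoSidedIdeal.add_mem _ h1 h2, by rw [comp_add, comp_add, e1, e2], ?_⟩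
    intro w hw
    rw [MonoidAlgebra.coeff_add] at hw
    rcases Finset.mem_union.mp (Finsupp.support_add hw) with h | h
    · exact s1 w h
    · exact s2 w h
  have Pneg : ∀ x, P x → P (-x) := by
    intro x hx m
    obtain ⟨F, h1, e1, s1⟩ := hx m
    refine ⟨-F, TwoSidedIdeal.neg_mem _ h1, by rw [comp_neg, comp_neg, e1], ?_⟩
    intro w hw
    rw [MonoidAlgebra.coeff_neg, Finsupp.support_neg] at hw
    exact s1 w hw
  have Psmul : ∀ (c : R) x, P x → P (c • x) := by
    intro c x hx m
    obtain ⟨F, h1, e1, s1⟩ := hx m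
    refine ⟨c • F, smul_mem_ideal c h1, by rw [comp_smul, comp_smul, e1], ?_⟩
    intro w hw
    rw [MonoidAlgebra.coeff_smul] at hw
    exact s1 w (Finsupp.support_smul hw)
  have Psand : ∀ (u v : Word n), ∀ g ∈ G, g ≠ 0 → P (mono R u * LH d g * mono R v) := by
    intro u v g hgG hg0 m
    rw [sandwich_eq]
    by_cases hm : m = wdeg d u + maxdeg d g + wdeg d v
    · refine ⟨mono R u * g * mono R v,
        TwoSidedIdeal.mul_mem_right _ _ _
          (TwoSidedIdeal.mul_mem_left _ _ _ (TwoSidedIdeal.subset_span hgG)), ?_, ?_⟩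
      · rw [sandwich_eq, comp_mapDomain, comp_mapDomain]
        congr 1
        ext z
        rw [MonoidAlgebra.coeff_ofCoeff, MonoidAlgebra.coeff_ofCoeff, Finsupp.filter_apply,
          Finsupp.filter_apply]
        by_cases hz : wdeg d (u * z * v) = m
        · rw [if_pos hz, if_pos hz]
          have hzd : wdeg d z = maxdeg d g := by
            rw [wdeg_mul, wdeg_mul] at hz
            omega
          rw [LH_eq_comp, comp_apply, if_pos hzd]
        · rw [if_neg hz, if_neg hz]
      · intro w hw
        rw [sandwich_eq] at hw
        obtain ⟨w', hw', rfl⟩ := Finset.mem_image.mp (Finsupp.mapDomain_support hw)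
        rw [wdeg_mul, wdeg_mul, hm]
        have := le_maxdeg (d := d) hw'
        omega
    · refine ⟨0, TwoSidedIdeal.zero_mem _, ?_, by simp⟩
      rw [comp_zero, comp_eq_zero]
      intro w hw
      obtain ⟨w', hw', rfl⟩ := Finset.mem_image.mp (Finsupp.mapDomain_support hw)
      rw [wdeg_mul, wdeg_mul, LH_support_wdeg d g hw']
      omega
  have Pgen : ∀ (a b : FreeAlg R n), ∀ g ∈ G, g ≠ 0 → P (a * LH d g * b) := by
    intro a b g hgG hg0
    induction a using MonoidAlgebra.induction_on with
    | of u =>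
      induction b using MonoidAlgebra.induction_on with
      | of v => exact Psand u v g hgG hg0
      | add f1 f2 h1 h2 => rw [mul_add]; exact Padd _ _ h1 h2
      | smul c f hf => rw [mul_smul_comm]; exact Psmul c _ hf
    | add a1 a2 h1 h2 => rw [add_mul, add_mul]; exact Padd _ _ h1 h2
    | smul c a ha => rw [smul_mul_assoc, smul_mul_assoc]; exact Psmul c _ ha
  have Pall : ∀ y : FreeAlg R n, y ∈ AddSubgroup.closure
      ((Set.univ : Set (FreeAlg R n)) * LHset d G * Set.univ) → P y := by
    intro y hy
    induction hy using AddSubgroup.closure_induction with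
    | mem y hy =>
      rw [Set.mem_mul] at hy
      obtain ⟨p, hp, q, hq, rfl⟩ := hy
      rw [Set.mem_mul] at hp
      obtain ⟨a, -, lh, hlh, rfl⟩ := hp
      obtain ⟨g, hgG, hg0, rfl⟩ := hlh
      exact Pgen a q g hgG hg0
    | zero => exact Pzero
    | add x y _ _ ihx ihy => exact Padd _ _ ihx ihy
    | neg x _ ihx => exact Pneg _ ihx
  have hPx : P x := by
    rw [TwoSidedIdeal.mem_span_iff_mem_addSubgroup_closure] at hx
    exact Pall x hx
  -- now extract
  obtain ⟨F, hFspan, hFcomp, hFdeg⟩ := hPx (maxdeg d x)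
  have hcompx : comp d (maxdeg d x) x = LH d x := (LH_eq_comp d x).symm
  rw [hcompx] at hFcomp
  have hFL : F.coeff (LMon x) = x.coeff (LMon x) := by
    have h1 : (comp d (maxdeg d x) F).coeff (LMon x) = (LH d x).coeff (LMon x) := by rw [hFcomp]
    rw [comp_apply, if_pos (wdeg_LMon d hord hx0), LH_apply_LMon d hord hx0] at h1
    exact h1
  have hF0 : F ≠ 0 := by
    intro h0
    rw [h0] at hFL
    exact LCoef_ne_zero hx0 (by rw [LCoef, ← hFL]; rfl)
  have hLM : LMon F = LMon x := by
    refine LMon_eq_of ?_ ?_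
    · rw [Finsupp.mem_support_iff, hFL]
      exact LCoef_ne_zero hx0
    · intro w hw
      by_cases hdeg : wdeg d w = maxdeg d x
      · have hwc : w ∈ (LH d x).coeff.support := by
          rw [← hFcomp, Finsupp.mem_support_iff, comp_apply, if_pos hdeg]
          exact Finsupp.mem_support_iff.mp hw
        exact le_LMon (LH_support_subset d x hwc)
      · have : wdeg d w < wdeg d (LMon x) := by
          rw [wdeg_LMon d hord hx0]
          exact lt_of_le_of_ne (hFdeg w hw) hdeg
        exact le_of_lt (hord.2 _ _ this)
  obtain ⟨g, hgG, hdvd⟩ := hGB.2 F hFspan hF0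
  rw [hLM] at hdvd
  exact ⟨g, hgG, hdvd⟩

end SpanLH

section TopMul
variable [LinearOrder (Word n)]

lemma single_eq_smul_mono (v : Word n) (c : R) :
    MonoidAlgebra.single v c = c • mono R v := by
  rw [mono, MonoidAlgebra.of_apply, MonoidAlgebra.smul_single', mul_one]

lemma mul_single_right (f : FreeAlg R n) (v : Word n) (c : R) :
    f * MonoidAlgebra.single v c = c • MonoidAlgebra.mapDomain (· * v) f := by
  rw [single_eq_smul_mono, mul_smul_comm, mul_mono_eq]

lemma mul_right_word_inj (s : Word n) : Function.Injective (fun u : Word n => u * s) := by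
  intro a b hab; simpa using hab

lemma top_mul (hmo : IsMonomialOrder n) {f h : FreeAlg R n} (hf : f ≠ 0) (hh : h ≠ 0)
    (w : Word n) :
    (f * mono R w * h).coeff (LMon f * w * LMon h) = LCoef f * LCoef h ∧
    ∀ z ∈ (f * mono R w * h).coeff.support, z ≤ LMon f * w * LMon h := by
  have hsupp : ∀ z ∈ (f * mono R w * h).coeff.support, z ≤ LMon f * w * LMon h := by
    intro z hz
    have h1 := MonoidAlgebra.support_coeff_mul_subset (f * mono R w) h hz
    rw [Finset.mem_mul] at h1
    obtain ⟨p, hp, v, hv, rfl⟩ := h1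
    rw [mul_mono_eq] at hp
    obtain ⟨u, hu, rfl⟩ := Finset.mem_image.mp (Finsupp.mapDomain_support hp)
    calc u * w * v ≤ LMon f * w * v := by
          have := sandwich_le hmo 1 v (sandwich_le hmo 1 w (le_LMon hu))
          simpa using this
      _ ≤ LMon f * w * LMon h := by
          have := sandwich_le hmo (LMon f * w) 1 (le_LMon hv)
          simpa using this
  refine ⟨?_, hsupp⟩
  have hrep : f * mono R w * h = h.coeff.sum fun v cv => (f * mono R w) * MonoidAlgebra.single v cv := by
    conv_lhs => rw [← MonoidAlgebra.sum_coeff_single h, Finsupp.mul_sum]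
  rw [hrep, Finsupp.sum, MonoidAlgebra.coeff_sum, Finsupp.finset_sum_apply]
  have hFcoef : (f * mono R w).coeff (LMon f * w) = LCoef f := by
    rw [mul_mono_eq]
    exact Finsupp.mapDomain_apply (mul_right_word_inj w) f.coeff (LMon f)
  rw [Finset.sum_eq_single (LMon h) ?side ?notmem]
  case notmem =>
    intro hnot
    exact absurd (LMon_mem_support hh) hnot
  case side =>
    intro v hv hne
    rw [mul_single_right, MonoidAlgebra.coeff_smul_apply]
    have hzero : (MonoidAlgebra.mapDomain (· * v) (f * mono R w)).coeff (LMon f * w * LMon h) = 0 := by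
      by_contra h0
      have hmem := Finsupp.mem_support_iff.mpr h0
      obtain ⟨p, hp, heq⟩ := Finset.mem_image.mp (Finsupp.mapDomain_support hmem)
      rw [mul_mono_eq] at hp
      obtain ⟨u, hu, rfl⟩ := Finset.mem_image.mp (Finsupp.mapDomain_support hp)
      have hvlt : v < LMon h := lt_of_le_of_ne (le_LMon hv) hne
      have hlt : u * w * v < u * w * LMon h := by
        have := hmo.2 (u * w) v (LMon h) 1 hvlt
        simpa using this
      have hle : u * w * LMon h ≤ LMon f * w * LMon h := by
        have := sandwich_le hmo 1 (w * LMon h) (le_LMon hu)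
        simpa [mul_assoc] using this
      rw [heq] at hlt
      exact absurd (lt_of_lt_of_le hlt hle) (lt_irrefl _)
    rw [hzero, smul_eq_mul, mul_zero]
  · rw [mul_single_right, MonoidAlgebra.coeff_smul_apply]
    have : (MonoidAlgebra.mapDomain (· * LMon h) (f * mono R w)).coeff (LMon f * w * LMon h)
        = (f * mono R w).coeff (LMon f * w) :=
      Finsupp.mapDomain_apply (mul_right_word_inj (LMon h)) (f * mono R w).coeff (LMon f * w)
    rw [this, hFcoef, smul_eq_mul, LCoef, mul_comm]
    rfl

end TopMul

section Quot
variable [LinearOrder (Word n)]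

lemma quot_coe_zero_iff (J : TwoSidedIdeal (FreeAlg R n)) (x : FreeAlg R n) :
    (x : QuotRing J) = 0 ↔ x ∈ J := by
  rw [← RingCon.coe_zero, RingCon.eq]
  exact (J.mem_iff x).symm

lemma quot_surj (J : TwoSidedIdeal (FreeAlg R n)) (a : QuotRing J) :
    ∃ x : FreeAlg R n, (x : QuotRing J) = a := by
  obtain ⟨x, hx⟩ := Quot.exists_rep a
  exact ⟨x, hx⟩

lemma quot_eq_iff (J : TwoSidedIdeal (FreeAlg R n)) (x y : FreeAlg R n) :
    (x : QuotRing J) = (y : QuotRing J) ↔ x - y ∈ J := by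
  rw [RingCon.eq, TwoSidedIdeal.rel_iff]

end Quot

section Main
variable [LinearOrder (Word n)]

lemma prime_main (hmo : IsMonomialOrder n) {G : Set (FreeAlg R n)}
    (hmonic : ∀ g ∈ G, IsMonic g)
    (hP : ∀ a b : QuotRing (TwoSidedIdeal.span (mono R '' LMset G)),
      (∀ r, a * r * b = 0) → a = 0 ∨ b = 0)
    (J : TwoSidedIdeal (FreeAlg R n))
    (hg : ∀ v ∈ LMset G, ∃ h ∈ J, h ≠ 0 ∧ LCoef h = 1 ∧ LMon h = v)
    (hJ : ∀ f ∈ J, f ≠ 0 → ∃ g ∈ G, MDvd (LMon g) (LMon f)) :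
    ∀ a b : QuotRing J, (∀ r, a * r * b = 0) → a = 0 ∨ b = 0 := by
  intro a b hab
  by_contra hcon
  push_neg at hcon
  obtain ⟨ha, hb⟩ := hcon
  obtain ⟨f₀, hf₀⟩ := quot_surj J a
  obtain ⟨h₀, hh₀⟩ := quot_surj J b
  obtain ⟨f, hfJ, hfalt⟩ := reduce hmo hg f₀
  obtain ⟨h, hhJ, hhalt⟩ := reduce hmo hg h₀
  have hfa : (f : QuotRing J) = a := by
    rw [← hf₀]; exact ((quot_eq_iff J f₀ f).mpr hfJ).symm
  have hhb : (h : QuotRing J) = b := by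
    rw [← hh₀]; exact ((quot_eq_iff J h₀ h).mpr hhJ).symm
  rcases hfalt with rfl | ⟨hf0, hfnorm⟩
  · exact ha (by rw [← hfa]; exact RingCon.coe_zero _)
  rcases hhalt with rfl | ⟨hh0, hhnorm⟩
  · exact hb (by rw [← hhb]; exact RingCon.coe_zero _)
  set J0 := TwoSidedIdeal.span (mono R '' LMset G) with hJ0
  set a' : QuotRing J0 :=
    ((MonoidAlgebra.single (LMon f) (LCoef f) : FreeAlg R n) : QuotRing J0) with ha'
  set b' : QuotRing J0 :=
    ((MonoidAlgebra.single (LMon h) (LCoef h) : FreeAlg R n) : QuotRing J0) with hb'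
  have ha'0 : a' ≠ 0 := by
    intro h0
    rw [ha', quot_coe_zero_iff] at h0
    apply hfnorm
    refine mem_monomialIdeal_support h0 (LMon f) ?_
    rw [Finsupp.mem_support_iff]
    simpa [MonoidAlgebra.coeff_single, Finsupp.single_eq_same] using LCoef_ne_zero hf0
  have hb'0 : b' ≠ 0 := by
    intro h0
    rw [hb', quot_coe_zero_iff] at h0
    apply hhnorm
    refine mem_monomialIdeal_support h0 (LMon h) ?_
    rw [Finsupp.mem_support_iff]
    simpa [MonoidAlgebra.coeff_single, Finsupp.single_eq_same] using LCoef_ne_zero hh0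
  have hex : ∃ r : QuotRing J0, a' * r * b' ≠ 0 := by
    by_contra hall
    push_neg at hall
    rcases hP a' b' hall with h0 | h0
    exacts [ha'0 h0, hb'0 h0]
  obtain ⟨r, hr⟩ := hex
  obtain ⟨t, rfl⟩ := quot_surj J0 r
  have hXnot : (MonoidAlgebra.single (LMon f) (LCoef f) * t *
      MonoidAlgebra.single (LMon h) (LCoef h)) ∉ J0 := by
    intro hmem
    apply hr
    rw [ha', hb', ← RingCon.coe_mul, ← RingCon.coe_mul, quot_coe_zero_iff]
    exact hmem
  have key : ∃ w ∈ t.coeff.support, (LCoef f * LCoef h) * t.coeff w ≠ 0 ∧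
      ¬ NonNormal G (LMon f * w * LMon h) := by
    by_contra hbad
    push_neg at hbad
    apply hXnot
    have hXeq : MonoidAlgebra.single (LMon f) (LCoef f) * t *
        MonoidAlgebra.single (LMon h) (LCoef h)
        = ∑ w ∈ t.coeff.support,
            MonoidAlgebra.single (LMon f * w * LMon h) ((LCoef f * LCoef h) * t.coeff w) := by
      rw [single_eq_smul_mono, single_eq_smul_mono, smul_mul_assoc, smul_mul_assoc,
        mul_smul_comm, smul_smul, sandwich_eq]
      rw [show MonoidAlgebra.mapDomain (fun u => LMon f * u * LMon h) t
          = ∑ w ∈ t.coeff.support, MonoidAlgebra.single (LMon f * w * LMon h) (t.coeff w) by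
        apply MonoidAlgebra.coeff_injective; rw [MonoidAlgebra.coeff_sum]; rfl]
      rw [Finset.smul_sum]
      refine Finset.sum_congr rfl fun w _ => ?_
      rw [MonoidAlgebra.smul_single, smul_eq_mul]
    rw [hXeq]
    refine Finset.sum_induction _ (· ∈ J0) (fun x y hx hy => J0.add_mem hx hy)
      J0.zero_mem ?_
    intro w hw
    by_cases hc : (LCoef f * LCoef h) * t.coeff w = 0
    · rw [hc, MonoidAlgebra.single_zero]; exact J0.zero_mem
    · exact nonNormal_single_mem (hbad w hw hc) _
  obtain ⟨w, hws, hwne, hwnorm⟩ := key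
  have h2 := hab ((t.coeff w • mono R w : FreeAlg R n) : QuotRing J)
  rw [← hfa, ← hhb, ← RingCon.coe_mul, ← RingCon.coe_mul, quot_coe_zero_iff] at h2
  set Y := f * (t.coeff w • mono R w) * h with hYdef
  have hYeq : Y = t.coeff w • (f * mono R w * h) := by
    rw [hYdef, mul_smul_comm, smul_mul_assoc]
  obtain ⟨hco, hbound⟩ := top_mul hmo hf0 hh0 w
  have hYco : Y.coeff (LMon f * w * LMon h) = t.coeff w * (LCoef f * LCoef h) := by
    rw [hYeq]
    rw [MonoidAlgebra.coeff_smul_apply, hco, smul_eq_mul]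
  have hYne : Y.coeff (LMon f * w * LMon h) ≠ 0 := by
    rw [hYco, mul_comm]; exact hwne
  have hY0 : Y ≠ 0 := fun h0 => hYne (by rw [h0]; rfl)
  have hLMY : LMon Y = LMon f * w * LMon h := by
    refine LMon_eq_of (Finsupp.mem_support_iff.mpr hYne) ?_
    intro z hz
    rw [hYeq, MonoidAlgebra.coeff_smul] at hz
    exact hbound z (Finsupp.support_smul hz)
  obtain ⟨g, hgG, hdvd⟩ := hJ Y h2 hY0
  rw [hLMY] at hdvd
  exact hwnorm ⟨LMon g, ⟨g, hgG, (hmonic g hgG).1, rfl⟩, hdvd⟩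

end Main

/-- If `G` is a monic Gröbner basis of `I = ⟨G⟩` with respect to an
ℕ-graded monomial ordering and the monomial algebra `R⟨X⟩/⟨LM(G)⟩` is a prime ring, then so are
`R⟨X⟩/⟨LH(G)⟩` and `A = R⟨X⟩/I`. -/
theorem prime_lifts [LinearOrder (Word n)]
    (d : Fin n → ℕ) (hd : ∀ i, 0 < d i) (hord : IsGradedMonomialOrder d)
    (G : Set (FreeAlg R n)) (hGB : IsMonicGB G (TwoSidedIdeal.span G))
    (hP : ∀ a b : QuotRing (TwoSidedIdeal.span (mono R '' LMset G)),
      (∀ r, a * r * b = 0) → a = 0 ∨ b = 0) :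
    (∀ a b : QuotRing (TwoSidedIdeal.span (LHset d G)),
      (∀ r, a * r * b = 0) → a = 0 ∨ b = 0) ∧
    (∀ a b : QuotRing (TwoSidedIdeal.span G),
      (∀ r, a * r * b = 0) → a = 0 ∨ b = 0) := by
  obtain ⟨hmonic, hGBprop⟩ := hGB
  have hmo : IsMonomialOrder n := hord.1
  constructor
  · refine prime_main hmo hmonic hP (TwoSidedIdeal.span (LHset d G)) ?_ ?_
    · intro v hv
      obtain ⟨g, hgG, hg0, rfl⟩ := hv
      exact ⟨LH d g, TwoSidedIdeal.subset_span ⟨g, hgG, hg0, rfl⟩,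
        LH_ne_zero d hord hg0,
        by rw [LCoef_LH d hord hg0]; exact (hmonic g hgG).2,
        LMon_LH d hord hg0⟩
    · intro x hx hx0
      exact span_LH_LMon d hord ⟨hmonic, hGBprop⟩ hx hx0
  · refine prime_main hmo hmonic hP (TwoSidedIdeal.span G) ?_ hGBprop
    intro v hv
    obtain ⟨g, hgG, hg0, rfl⟩ := hv
    exact ⟨g, TwoSidedIdeal.subset_span hgG, hg0, (hmonic g hgG).2, rfl⟩
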